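/- For all positive integers m and n, the value P(m,n) is an integer; that is, the function (m,n) ↦ P(m,n) maps ℕ×ℕ into ℤ. -/

import Mathlib

/-- The polynomial `t(ν,μ,m;x) = ∏_{k=1}^{μ}(x+ν−μ+k) · ∏_{l=1}^{ν}(x−1−μ+l)` (independent of `m`). -/
noncomputable def tPoly (ν μ : ℕ) : Polynomial ℚ :=
  (∏ k ∈ Finset.range μ, (Polynomial.X + Polynomial.C ((ν : ℚ) - (μ : ℚ) + (k : ℚ) + 1))) *
  (∏ l ∈ Finset.range ν, (Polynomial.X + Polynomial.C ((l : ℚ) - (μ : ℚ))))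

/-- `P(m,x) = ∑_{ν,μ=0}^{m−1} t(ν,μ,m;x)·t(m−1−μ,m−1−ν,m;x)/(ν!(m−1−ν)!μ!(m−1−μ)!)`, with `P(0,x)=0`. -/
noncomputable def Ppoly (m : ℕ) : Polynomial ℚ :=
  ∑ ν ∈ Finset.range m, ∑ μ ∈ Finset.range m,
    Polynomial.C (((ν.factorial : ℚ) * ((m - 1 - ν).factorial : ℚ) *
        (μ.factorial : ℚ) * ((m - 1 - μ).factorial : ℚ))⁻¹) *
      (tPoly ν μ * tPoly (m - 1 - μ) (m - 1 - ν))

/-- Product of `k` consecutive integers starting at `a` equals the ascending Pochhammer eval. -/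
lemma prod_range_eq_ascPochhammer (a : ℤ) (k : ℕ) :
    (∏ i ∈ Finset.range k, (a + (i : ℤ))) = (ascPochhammer ℤ k).eval a := by
  induction k with
  | zero => simp
  | succ n ih =>
      rw [Finset.prod_range_succ, ih, ascPochhammer_succ_right, Polynomial.eval_mul,
        Polynomial.eval_add, Polynomial.eval_X, Polynomial.eval_natCast]

/-- `k!` divides a product of `k` consecutive integers. -/
lemma factorial_dvd_prod (a : ℤ) (k : ℕ) :
    (k.factorial : ℤ) ∣ ∏ i ∈ Finset.range k, (a + (i : ℤ)) := by
  refine ⟨Ring.multichoose a k, ?_⟩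
  rw [prod_range_eq_ascPochhammer, Polynomial.eval_eq_smeval,
    Ring.smeval_ascPochhammer_int_ofNat,
    ← Ring.factorial_nsmul_multichoose_eq_ascPochhammer, nsmul_eq_mul]

/-- Rational version: the product equals `z * k!` for some integer `z`. -/
lemma prod_range_int (a : ℤ) (k : ℕ) :
    ∃ z : ℤ, (∏ i ∈ Finset.range k, ((a : ℚ) + (i : ℚ))) = (z : ℚ) * (k.factorial : ℚ) := by
  obtain ⟨z, hz⟩ := factorial_dvd_prod a k
  refine ⟨z, ?_⟩
  have : ((∏ i ∈ Finset.range k, (a + (i : ℤ)) : ℤ) : ℚ)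
      = ∏ i ∈ Finset.range k, ((a : ℚ) + (i : ℚ)) := by push_cast; rfl
  rw [← this, hz]; push_cast; ring

/-- The evaluation of `tPoly a b` at a natural number is an integer multiple of `b! * a!`. -/
lemma tPoly_eval_int (a b n : ℕ) :
    ∃ z : ℤ, (tPoly a b).eval (n : ℚ) = (z : ℚ) * ((b.factorial : ℚ) * (a.factorial : ℚ)) := by
  obtain ⟨z1, h1⟩ := prod_range_int ((n : ℤ) + a - b + 1) b
  obtain ⟨z2, h2⟩ := prod_range_int ((n : ℤ) - b) a
  refine ⟨z1 * z2, ?_⟩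
  have e1 : (∏ k ∈ Finset.range b, ((n : ℚ) + ((a : ℚ) - (b : ℚ) + (k : ℚ) + 1)))
      = ∏ k ∈ Finset.range b, ((((n : ℤ) + a - b + 1 : ℤ) : ℚ) + (k : ℚ)) := by
    refine Finset.prod_congr rfl fun k _ => ?_
    push_cast; ring
  have e2 : (∏ l ∈ Finset.range a, ((n : ℚ) + ((l : ℚ) - (b : ℚ))))
      = ∏ l ∈ Finset.range a, ((((n : ℤ) - b : ℤ) : ℚ) + (l : ℚ)) := by
    refine Finset.prod_congr rfl fun l _ => ?_
    push_cast; ring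
  simp only [tPoly, Polynomial.eval_mul, Polynomial.eval_prod, Polynomial.eval_add,
    Polynomial.eval_X, Polynomial.eval_C]
  rw [e1, e2, h1, h2]
  push_cast; ring

/-- For all positive integers `m, n`, the value `P(m,n)` is an integer. -/
theorem stmt2 : ∀ m n : ℕ, 0 < m → 0 < n → ∃ z : ℤ, (Ppoly m).eval (n : ℚ) = (z : ℚ) := by
  intro m n _ _
  have key : (Ppoly m).eval (n : ℚ) ∈ (Int.castRingHom ℚ).range := by
    rw [Ppoly]
    simp only [Polynomial.eval_finset_sum]
    refine Subring.sum_mem _ fun ν _ => Subring.sum_mem _ fun μ _ => ?_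
    rw [Polynomial.eval_mul, Polynomial.eval_C, Polynomial.eval_mul]
    obtain ⟨z1, h1⟩ := tPoly_eval_int ν μ n
    obtain ⟨z2, h2⟩ := tPoly_eval_int (m - 1 - μ) (m - 1 - ν) n
    refine ⟨z1 * z2, ?_⟩
    rw [h1, h2]
    have f1 : ((ν.factorial : ℚ)) ≠ 0 := Nat.cast_ne_zero.2 (Nat.factorial_ne_zero _)
    have f2 : (((m - 1 - ν).factorial : ℚ)) ≠ 0 := Nat.cast_ne_zero.2 (Nat.factorial_ne_zero _)
    have f3 : ((μ.factorial : ℚ)) ≠ 0 := Nat.cast_ne_zero.2 (Nat.factorial_ne_zero _)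
    have f4 : (((m - 1 - μ).factorial : ℚ)) ≠ 0 := Nat.cast_ne_zero.2 (Nat.factorial_ne_zero _)
    simp only [map_mul, Int.coe_castRingHom]
    field_simp
  obtain ⟨z, hz⟩ := key
  exact ⟨z, hz.symm⟩
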